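/- arXiv:1209.2185 — 2 statements merged into one kernel-verified Lean document; each statement's English description precedes it below -/
import Mathlib

section
/- Let A ∈ ℝ^{m×n}, B ∈ ℝ^{m×ℓ}, C = [A ; B] (column concatenation) of rank ω with compact SVD factor U_C ∈ ℝ^{m×ω}. Suppose S ∈ ℝ^{r×m} satisfies √(1−ε) ≤ σ_ω(S U_C) ≤ σ_1(S U_C) ≤ √(1+ε) for some 0 < ε < 1. Then for every i ≤ min(n,ℓ): |σ_i(A^T B) − σ_i(A^T S^T S B)| ≤ ε · ‖A‖₂ · ‖B‖₂. -/
open Matrix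

noncomputable def svals {p q : ℕ} (X : Matrix (Fin p) (Fin q) ℝ) : Fin q → ℝ :=
  fun i => Real.sqrt ((show (Xᵀ * X).IsHermitian by simpa using Matrix.isHermitian_conjTranspose_mul_self X).eigenvalues
    (Tuple.sort ((show (Xᵀ * X).IsHermitian by simpa using Matrix.isHermitian_conjTranspose_mul_self X).eigenvalues) i.rev))

noncomputable def sNorm {p q : ℕ} (X : Matrix (Fin p) (Fin q) ℝ) : ℝ :=
  ⨆ i, svals X i

lemma Matrix.isHermitian_transpose_mul_self {p q : ℕ} (X : Matrix (Fin p) (Fin q) ℝ) :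
    (Xᵀ * X).IsHermitian := by
  simpa using Matrix.isHermitian_conjTranspose_mul_self X

noncomputable def toE {q : ℕ} (x : Fin q → ℝ) : EuclideanSpace ℝ (Fin q) := WithLp.toLp 2 x

lemma dot_eq_inner {q : ℕ} (x y : Fin q → ℝ) : x ⬝ᵥ y = inner ℝ (toE x) (toE y) := by
  simp [PiLp.inner_apply, dotProduct, toE, mul_comm]

lemma norm_toE_sq {q : ℕ} (x : Fin q → ℝ) : ‖toE x‖ ^ 2 = x ⬝ᵥ x := by
  rw [dot_eq_inner, real_inner_self_eq_norm_sq]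

lemma norm_toE_eq_sqrt {q : ℕ} (x : Fin q → ℝ) : ‖toE x‖ = Real.sqrt (x ⬝ᵥ x) := by
  rw [← norm_toE_sq, Real.sqrt_sq (norm_nonneg _)]

section basis
variable {q : ℕ} {H : Matrix (Fin q) (Fin q) ℝ}
  (v : OrthonormalBasis (Fin q) ℝ (EuclideanSpace ℝ (Fin q))) (ν : Fin q → ℝ)
  (hv : ∀ j, H *ᵥ ⇑(v j) = ν j • ⇑(v j))

include hv

lemma mulVec_expand_basis (x : EuclideanSpace ℝ (Fin q)) :
    toE (H *ᵥ x) = ∑ j, (ν j * v.repr x j) • v j := by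
  have hv' : ∀ j, Matrix.toEuclideanLin H (v j) = ν j • v j := by
    intro j
    rw [toEuclideanLin_apply]
    show (WithLp.equiv 2 _).symm (H *ᵥ ⇑(v j)) = _
    rw [hv j]
    rfl
  have key : toE (H *ᵥ x) = Matrix.toEuclideanLin H x := by
    rw [toEuclideanLin_apply]; rfl
  set c := v.repr x with hc
  have hx : x = ∑ j, c j • v j := (v.sum_repr x).symm
  rw [key, hx, map_sum]
  refine Finset.sum_congr rfl fun j _ => ?_
  rw [_root_.map_smul, hv' j, smul_smul, mul_comm]

lemma dot_self_eq_sum_repr (x : EuclideanSpace ℝ (Fin q)) :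
    x ⬝ᵥ x = ∑ j, (v.repr x j) ^ 2 := by
  have h1 : x ⬝ᵥ x = ‖x‖ ^ 2 := by rw [← norm_toE_sq]; rfl
  rw [h1, ← v.repr.norm_map x]
  rw [EuclideanSpace.norm_eq, Real.sq_sqrt (by positivity)]
  exact Finset.sum_congr rfl fun j _ => by rw [Real.norm_eq_abs, sq_abs]

lemma dot_mulVec_basis (x : EuclideanSpace ℝ (Fin q)) :
    x ⬝ᵥ (H *ᵥ x) = ∑ j, ν j * (v.repr x j) ^ 2 := by
  have h1 : x ⬝ᵥ (H *ᵥ x) = inner ℝ (x : EuclideanSpace ℝ (Fin q)) (toE (H *ᵥ x)) :=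
    dot_eq_inner x (H *ᵥ x)
  rw [h1, mulVec_expand_basis v ν hv x, inner_sum]
  refine Finset.sum_congr rfl fun j _ => ?_
  rw [real_inner_smul_right, real_inner_comm, ← v.repr_apply_apply]
  ring

lemma norm_mulVec_basis_le {c : ℝ} (hc : 0 ≤ c) (hev : ∀ j, |ν j| ≤ c) (x : Fin q → ℝ) :
    ‖toE (H *ᵥ x)‖ ≤ c * ‖toE x‖ := by
  set d : Fin q → ℝ := fun j => ν j * v.repr (toE x) j with hd
  have hsq : ‖toE (H *ᵥ x)‖ ^ 2 ≤ (c * ‖toE x‖) ^ 2 := by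
    have h3 : ‖toE (H *ᵥ x)‖ ^ 2 = ∑ j, d j ^ 2 := by
      have hexp := mulVec_expand_basis v ν hv (toE x)
      have heq : toE (H *ᵥ x) = toE (H *ᵥ (toE x)) := rfl
      have hre : (∑ j, (ν j * v.repr (toE x) j) • v j) = ∑ j, toE d j • v j := rfl
      rw [heq, hexp, hre, v.sum_repr_symm (toE d), LinearIsometryEquiv.norm_map, norm_toE_sq]
      simp [dotProduct, pow_two]
    have h4 : ‖toE x‖ ^ 2 = ∑ j, (v.repr (toE x) j) ^ 2 := by
      rw [norm_toE_sq]
      exact dot_self_eq_sum_repr v ν hv (toE x)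
    rw [h3, mul_pow, h4, Finset.mul_sum]
    refine Finset.sum_le_sum fun j _ => ?_
    have h5 : ν j ^ 2 ≤ c ^ 2 := by
      have := hev j
      nlinarith [abs_nonneg (ν j), le_abs_self (ν j), neg_abs_le (ν j)]
    simp only [hd]; nlinarith [sq_nonneg (v.repr (toE x) j)]
  have h6 : 0 ≤ c * ‖toE x‖ := by positivity
  nlinarith [norm_nonneg (toE (H *ᵥ x))]

end basis

lemma repr_eq_zero_of_mem_span {q : ℕ} (v : OrthonormalBasis (Fin q) ℝ (EuclideanSpace ℝ (Fin q)))
    (S : Set (Fin q)) {x : EuclideanSpace ℝ (Fin q)}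
    (hx : x ∈ Submodule.span ℝ (⇑v '' S)) {j : Fin q} (hj : j ∉ S) : v.repr x j = 0 := by
  induction hx using Submodule.span_induction with
  | mem y hy =>
    obtain ⟨k, hk, rfl⟩ := hy
    rw [v.repr_self, EuclideanSpace.single_apply]
    exact if_neg (by rintro rfl; exact hj hk)
  | zero => simp
  | add y z _ _ hy hz => rw [map_add]; simp [hy, hz]
  | smul a y _ hy => rw [_root_.map_smul]; simp [hy]

lemma finrank_span_onb {q : ℕ} (v : OrthonormalBasis (Fin q) ℝ (EuclideanSpace ℝ (Fin q)))
    (S : Finset (Fin q)) :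
    Module.finrank ℝ (Submodule.span ℝ (⇑v '' ↑S)) = S.card := by
  rw [Set.image_eq_range]
  have hli2 : LinearIndependent ℝ (fun x : ↥(↑S : Set (Fin q)) => v ↑x) :=
    v.orthonormal.linearIndependent.comp _ Subtype.val_injective
  rw [finrank_span_eq_card hli2]
  simp

section spanBound
variable {q : ℕ} {H : Matrix (Fin q) (Fin q) ℝ}
  (v : OrthonormalBasis (Fin q) ℝ (EuclideanSpace ℝ (Fin q))) (ν : Fin q → ℝ)
  (hv : ∀ j, H *ᵥ ⇑(v j) = ν j • ⇑(v j))

include hv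

lemma dot_mulVec_ge_on_span (S : Set (Fin q)) {c : ℝ} (hev : ∀ j ∈ S, c ≤ ν j)
    {x : EuclideanSpace ℝ (Fin q)} (hx : x ∈ Submodule.span ℝ (⇑v '' S)) :
    c * (x ⬝ᵥ x) ≤ x ⬝ᵥ (H *ᵥ x) := by
  rw [dot_mulVec_basis v ν hv x, dot_self_eq_sum_repr v ν hv x, Finset.mul_sum]
  refine Finset.sum_le_sum fun j _ => ?_
  by_cases hj : j ∈ S
  · nlinarith [sq_nonneg (v.repr x j), hev j hj]
  · rw [repr_eq_zero_of_mem_span v S hx hj]; simp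

lemma dot_mulVec_le_on_span (S : Set (Fin q)) {c : ℝ} (hev : ∀ j ∈ S, ν j ≤ c)
    {x : EuclideanSpace ℝ (Fin q)} (hx : x ∈ Submodule.span ℝ (⇑v '' S)) :
    x ⬝ᵥ (H *ᵥ x) ≤ c * (x ⬝ᵥ x) := by
  rw [dot_mulVec_basis v ν hv x, dot_self_eq_sum_repr v ν hv x, Finset.mul_sum]
  refine Finset.sum_le_sum fun j _ => ?_
  by_cases hj : j ∈ S
  · nlinarith [sq_nonneg (v.repr x j), hev j hj]
  · rw [repr_eq_zero_of_mem_span v S hx hj]; simp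

end spanBound

lemma dot_transpose_mul_self {p q : ℕ} (X : Matrix (Fin p) (Fin q) ℝ) (x : Fin q → ℝ) :
    x ⬝ᵥ ((Xᴴ * X) *ᵥ x) = (X *ᵥ x) ⬝ᵥ (X *ᵥ x) := by
  have h : (Xᴴ : Matrix (Fin q) (Fin p) ℝ) = Xᵀ := by
    ext i j; simp [conjTranspose_apply]
  rw [h, ← mulVec_mulVec, dotProduct_mulVec, vecMul_transpose]

lemma le_of_sq_le_sq' {a b : ℝ} (ha : 0 ≤ a) (hb : 0 ≤ b) (h : a ^ 2 ≤ b ^ 2) : a ≤ b := by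
  nlinarith

lemma svals_nonneg {p q : ℕ} (X : Matrix (Fin p) (Fin q) ℝ) (i : Fin q) : 0 ≤ svals X i :=
  Real.sqrt_nonneg _

lemma svals_sq {p q : ℕ} (X : Matrix (Fin p) (Fin q) ℝ) (i : Fin q) :
    svals X i ^ 2 = (Matrix.isHermitian_transpose_mul_self X).eigenvalues
      (Tuple.sort ((Matrix.isHermitian_transpose_mul_self X).eigenvalues) i.rev) :=
  Real.sq_sqrt (Matrix.eigenvalues_conjTranspose_mul_self_nonneg X _)

lemma eigen_eq_svals_sq {p q : ℕ} (X : Matrix (Fin p) (Fin q) ℝ) (j : Fin q) :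
    (Matrix.isHermitian_transpose_mul_self X).eigenvalues j
      = svals X (((Tuple.sort ((Matrix.isHermitian_transpose_mul_self X).eigenvalues)).symm j).rev) ^ 2 := by
  rw [svals_sq, Fin.rev_rev, Equiv.apply_symm_apply]

lemma svals_le_sNorm {p q : ℕ} (X : Matrix (Fin p) (Fin q) ℝ) (i : Fin q) :
    svals X i ≤ sNorm X :=
  le_ciSup (Set.Finite.bddAbove (Set.finite_range _)) i

lemma sNorm_nonneg {p q : ℕ} (X : Matrix (Fin p) (Fin q) ℝ) : 0 ≤ sNorm X :=
  Real.iSup_nonneg fun i => svals_nonneg X i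

lemma eigen_le_sNorm_sq {p q : ℕ} (X : Matrix (Fin p) (Fin q) ℝ) (j : Fin q) :
    (Matrix.isHermitian_transpose_mul_self X).eigenvalues j ≤ sNorm X ^ 2 := by
  rw [eigen_eq_svals_sq X j]
  have h1 := svals_le_sNorm X (((Tuple.sort ((Matrix.isHermitian_transpose_mul_self X).eigenvalues)).symm j).rev)
  have h2 := svals_nonneg X (((Tuple.sort ((Matrix.isHermitian_transpose_mul_self X).eigenvalues)).symm j).rev)
  nlinarith

lemma mulVec_norm_le_sNorm {p q : ℕ} (X : Matrix (Fin p) (Fin q) ℝ) (u : Fin q → ℝ) :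
    ‖toE (X *ᵥ u)‖ ≤ sNorm X * ‖toE u‖ := by
  have hH := Matrix.isHermitian_transpose_mul_self X
  have hqf : (toE u) ⬝ᵥ ((Xᴴ * X) *ᵥ (toE u)) = ∑ j, hH.eigenvalues j * (hH.eigenvectorBasis.repr (toE u) j) ^ 2 :=
    dot_mulVec_basis hH.eigenvectorBasis hH.eigenvalues hH.mulVec_eigenvectorBasis (toE u)
  have hpar : (toE u) ⬝ᵥ (toE u) = ∑ j, (hH.eigenvectorBasis.repr (toE u) j) ^ 2 :=
    dot_self_eq_sum_repr hH.eigenvectorBasis hH.eigenvalues hH.mulVec_eigenvectorBasis (toE u)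
  have hsq : ‖toE (X *ᵥ u)‖ ^ 2 ≤ (sNorm X * ‖toE u‖) ^ 2 := by
    rw [norm_toE_sq]
    have h0 : (X *ᵥ u) ⬝ᵥ (X *ᵥ u) = (toE u) ⬝ᵥ ((Xᴴ * X) *ᵥ (toE u)) :=
      (dot_transpose_mul_self X u).symm
    rw [h0, hqf, mul_pow, norm_toE_sq]
    have h5 : (u ⬝ᵥ u) = ∑ j, (hH.eigenvectorBasis.repr (toE u) j) ^ 2 := hpar
    rw [h5, Finset.mul_sum]
    refine Finset.sum_le_sum fun j _ => ?_
    have := eigen_le_sNorm_sq X j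
    nlinarith [sq_nonneg (hH.eigenvectorBasis.repr (toE u) j)]
  exact le_of_sq_le_sq' (norm_nonneg _) (mul_nonneg (sNorm_nonneg X) (norm_nonneg _)) hsq

lemma toE_add {q : ℕ} (x y : Fin q → ℝ) : toE (x + y) = toE x + toE y := rfl

lemma weyl_svals {p q : ℕ} (X Y : Matrix (Fin p) (Fin q) ℝ) {c : ℝ} (hc : 0 ≤ c)
    (hd : ∀ u : Fin q → ℝ, ‖toE ((X - Y) *ᵥ u)‖ ≤ c * ‖toE u‖) (i : Fin q) :
    svals X i ≤ svals Y i + c := by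
  classical
  have hX := Matrix.isHermitian_transpose_mul_self X
  have hY := Matrix.isHermitian_transpose_mul_self Y
  set μX := (Matrix.isHermitian_transpose_mul_self X).eigenvalues with hμX
  set μY := (Matrix.isHermitian_transpose_mul_self Y).eigenvalues with hμY
  set σX := Tuple.sort μX with hσX
  set σY := Tuple.sort μY with hσY
  set SX : Finset (Fin q) := (Finset.Ici i.rev).image σX with hSX
  set SY : Finset (Fin q) := (Finset.Iic i.rev).image σY with hSY
  set vX := (Matrix.isHermitian_transpose_mul_self X).eigenvectorBasis with hvX
  set vY := (Matrix.isHermitian_transpose_mul_self Y).eigenvectorBasis with hvY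
  set WX := Submodule.span ℝ (⇑vX '' ↑SX) with hWX
  set WY := Submodule.span ℝ (⇑vY '' ↑SY) with hWY
  have hcardX : SX.card = q - i.rev.val := by
    rw [hSX, Finset.card_image_of_injective _ σX.injective, Fin.card_Ici]
  have hcardY : SY.card = i.rev.val + 1 := by
    rw [hSY, Finset.card_image_of_injective _ σY.injective, Fin.card_Iic]
  have hrev : i.rev.val = q - (i.val + 1) := Fin.val_rev i
  have hiq : i.val < q := i.isLt
  have hfX : Module.finrank ℝ WX = SX.card := finrank_span_onb vX SX
  have hfY : Module.finrank ℝ WY = SY.card := finrank_span_onb vY SY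
  have hsum := Submodule.finrank_sup_add_finrank_inf_eq WX WY
  have hle : Module.finrank ℝ ↥(WX ⊔ WY) ≤ q := by
    have := Submodule.finrank_le (WX ⊔ WY)
    rwa [finrank_euclideanSpace_fin] at this
  have hpos : 0 < Module.finrank ℝ ↥(WX ⊓ WY) := by omega
  have hne : WX ⊓ WY ≠ ⊥ := by
    intro h
    rw [h, finrank_bot] at hpos
    omega
  obtain ⟨x, hxmem, hx0⟩ := Submodule.exists_mem_ne_zero_of_ne_bot hne
  have hxX : x ∈ WX := (Submodule.mem_inf.mp hxmem).1
  have hxY : x ∈ WY := (Submodule.mem_inf.mp hxmem).2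
  -- lower bound for X
  have hminX : ∀ j ∈ (↑SX : Set (Fin q)), μX (σX i.rev) ≤ μX j := by
    intro j hj
    rw [hSX, Finset.coe_image, Set.mem_image] at hj
    obtain ⟨k, hk, rfl⟩ := hj
    have hk' : i.rev ≤ k := Finset.mem_Ici.mp (by simpa using hk)
    exact Tuple.monotone_sort μX hk'
  have hmaxY : ∀ j ∈ (↑SY : Set (Fin q)), μY j ≤ μY (σY i.rev) := by
    intro j hj
    rw [hSY, Finset.coe_image, Set.mem_image] at hj
    obtain ⟨k, hk, rfl⟩ := hj
    have hk' : k ≤ i.rev := Finset.mem_Iic.mp (by simpa using hk)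
    exact Tuple.monotone_sort μY hk'
  have h1 : svals X i ^ 2 * (x ⬝ᵥ x) ≤ (X *ᵥ x) ⬝ᵥ (X *ᵥ x) := by
    rw [← dot_transpose_mul_self, svals_sq]
    exact dot_mulVec_ge_on_span vX μX
      (Matrix.isHermitian_transpose_mul_self X).mulVec_eigenvectorBasis ↑SX hminX hxX
  have h2 : (Y *ᵥ x) ⬝ᵥ (Y *ᵥ x) ≤ svals Y i ^ 2 * (x ⬝ᵥ x) := by
    rw [← dot_transpose_mul_self, svals_sq]
    exact dot_mulVec_le_on_span vY μY
      (Matrix.isHermitian_transpose_mul_self Y).mulVec_eigenvectorBasis ↑SY hmaxY hxY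
  have hxx : x ⬝ᵥ x = ‖toE x‖ ^ 2 := (norm_toE_sq x).symm
  have hNx : (0:ℝ) < ‖toE x‖ := by
    rw [norm_pos_iff]
    exact hx0
  have hXlow : svals X i * ‖toE x‖ ≤ ‖toE (X *ᵥ x)‖ := by
    refine le_of_sq_le_sq' (mul_nonneg (svals_nonneg X i) (norm_nonneg _)) (norm_nonneg _) ?_
    rw [norm_toE_sq, mul_pow]
    calc svals X i ^ 2 * ‖toE x‖ ^ 2 = svals X i ^ 2 * (x ⬝ᵥ x) := by rw [hxx]
      _ ≤ (X *ᵥ x) ⬝ᵥ (X *ᵥ x) := h1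
  have hYup : ‖toE (Y *ᵥ x)‖ ≤ svals Y i * ‖toE x‖ := by
    refine le_of_sq_le_sq' (norm_nonneg _) (mul_nonneg (svals_nonneg Y i) (norm_nonneg _)) ?_
    rw [norm_toE_sq, mul_pow]
    calc (Y *ᵥ x) ⬝ᵥ (Y *ᵥ x) ≤ svals Y i ^ 2 * (x ⬝ᵥ x) := h2
      _ = svals Y i ^ 2 * ‖toE x‖ ^ 2 := by rw [hxx]
  have htri : ‖toE (X *ᵥ x)‖ ≤ ‖toE (Y *ᵥ x)‖ + ‖toE ((X - Y) *ᵥ x)‖ := by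
    have heq : toE (X *ᵥ x) = toE (Y *ᵥ x) + toE ((X - Y) *ᵥ x) := by
      rw [← toE_add]
      congr 1
      rw [sub_mulVec]
      ring
    rw [heq]
    exact norm_add_le _ _
  have hdx := hd x
  have hfinal : svals X i * ‖toE x‖ ≤ (svals Y i + c) * ‖toE x‖ := by
    calc svals X i * ‖toE x‖ ≤ ‖toE (X *ᵥ x)‖ := hXlow
      _ ≤ ‖toE (Y *ᵥ x)‖ + ‖toE ((X - Y) *ᵥ x)‖ := htri
      _ ≤ svals Y i * ‖toE x‖ + c * ‖toE x‖ := add_le_add hYup hdx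
      _ = (svals Y i + c) * ‖toE x‖ := by ring
  exact le_of_mul_le_mul_right hfinal hNx

lemma toE_neg {q : ℕ} (x : Fin q → ℝ) : toE (-x) = -toE x := rfl

lemma weyl_svals_abs {p q : ℕ} (X Y : Matrix (Fin p) (Fin q) ℝ) {c : ℝ} (hc : 0 ≤ c)
    (hd : ∀ u : Fin q → ℝ, ‖toE ((X - Y) *ᵥ u)‖ ≤ c * ‖toE u‖) (i : Fin q) :
    |svals X i - svals Y i| ≤ c := by
  rw [abs_sub_le_iff]
  constructor
  · have := weyl_svals X Y hc hd i; linarith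
  · have hd' : ∀ u : Fin q → ℝ, ‖toE ((Y - X) *ᵥ u)‖ ≤ c * ‖toE u‖ := by
      intro u
      have h1 : (Y - X) *ᵥ u = -((X - Y) *ᵥ u) := by
        rw [sub_mulVec, sub_mulVec]; ring
      rw [h1, toE_neg, norm_neg]
      exact hd u
    have := weyl_svals Y X hc hd' i; linarith

lemma real_conjT {a b : ℕ} (X : Matrix (Fin a) (Fin b) ℝ) : Xᴴ = Xᵀ := by
  ext i j; simp [conjTranspose_apply]

lemma exists_factor {m' ω' k : ℕ} (U : Matrix (Fin m') (Fin ω') ℝ) (A : Matrix (Fin m') (Fin k) ℝ)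
    (h : ∀ j, (fun i0 => A i0 j) ∈ LinearMap.range U.mulVecLin) : ∃ M : Matrix (Fin ω') (Fin k) ℝ, A = U * M := by
  choose w hw using h
  refine ⟨Matrix.of (fun a b => w b a), ?_⟩
  ext i j
  have := congrFun (hw j) i
  simp only [mulVecLin_apply] at this
  rw [Matrix.mul_apply, ← this]
  simp [Matrix.mulVec, dotProduct]

lemma transpose_mulVec_norm_le {m' k : ℕ} (M : Matrix (Fin m') (Fin k) ℝ) {s : ℝ} (hs : 0 ≤ s)
    (hM : ∀ y, ‖toE (M *ᵥ y)‖ ≤ s * ‖toE y‖) (w : Fin m' → ℝ) :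
    ‖toE (Mᵀ *ᵥ w)‖ ≤ s * ‖toE w‖ := by
  set y : Fin k → ℝ := Mᵀ *ᵥ w with hy
  set t : ℝ := ‖toE y‖ with ht
  have htn : 0 ≤ t := norm_nonneg _
  have h1 : t ^ 2 = y ⬝ᵥ y := norm_toE_sq y
  have h2 : y ⬝ᵥ y = w ⬝ᵥ (M *ᵥ y) := by
    rw [hy]
    nth_rewrite 1 [Matrix.mulVec_transpose]
    rw [← Matrix.dotProduct_mulVec]
  have h3 : w ⬝ᵥ (M *ᵥ y) ≤ ‖toE w‖ * ‖toE (M *ᵥ y)‖ := by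
    rw [dot_eq_inner]
    exact real_inner_le_norm _ _
  have h4 : ‖toE (M *ᵥ y)‖ ≤ s * t := hM y
  have h5 : t ^ 2 ≤ ‖toE w‖ * (s * t) := by
    calc t ^ 2 = w ⬝ᵥ (M *ᵥ y) := by rw [h1, h2]
      _ ≤ ‖toE w‖ * ‖toE (M *ᵥ y)‖ := h3
      _ ≤ ‖toE w‖ * (s * t) := by
          exact mul_le_mul_of_nonneg_left h4 (norm_nonneg _)
  rcases eq_or_lt_of_le htn with h | h
  · rw [← h]; positivity
  · nlinarith

lemma svals_def {p q : ℕ} (X : Matrix (Fin p) (Fin q) ℝ) (i : Fin q) :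
    svals X i = Real.sqrt ((Matrix.isHermitian_transpose_mul_self X).eigenvalues
      (Tuple.sort ((Matrix.isHermitian_transpose_mul_self X).eigenvalues) i.rev)) := rfl

theorem stmt8 {m n ℓ ω r : ℕ}
    (A : Matrix (Fin m) (Fin n) ℝ) (B : Matrix (Fin m) (Fin ℓ) ℝ)
    (UC : Matrix (Fin m) (Fin ω) ℝ) (S : Matrix (Fin r) (Fin m) ℝ)
    (hω : ω = (Matrix.fromCols A B).rank)
    (hUC : UCᵀ * UC = 1)
    (hrC : LinearMap.range UC.mulVecLin = LinearMap.range (Matrix.fromCols A B).mulVecLin)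
    (ε : ℝ) (hε0 : 0 < ε) (hε1 : ε < 1)
    (hsv : ∀ i, Real.sqrt (1 - ε) ≤ svals (S * UC) i ∧ svals (S * UC) i ≤ Real.sqrt (1 + ε))
    (i : Fin ℓ) (hi : (i : ℕ) < min n ℓ) :
    |svals (Aᵀ * B) i - svals (Aᵀ * Sᵀ * S * B) i| ≤ ε * sNorm A * sNorm B := by

  classical
  -- factor A and B through UC
  have hcolA : ∀ j, (fun i0 => A i0 j) ∈ LinearMap.range UC.mulVecLin := by
    intro j
    rw [hrC]
    refine ⟨Sum.elim (Pi.single j 1) 0, ?_⟩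
    rw [mulVecLin_apply, fromCols_mulVec_sumElim]
    funext i0
    simp [Matrix.mulVec_single]
  have hcolB : ∀ j, (fun i0 => B i0 j) ∈ LinearMap.range UC.mulVecLin := by
    intro j
    rw [hrC]
    refine ⟨Sum.elim 0 (Pi.single j 1), ?_⟩
    rw [mulVecLin_apply, fromCols_mulVec_sumElim]
    funext i0
    simp [Matrix.mulVec_single]
  obtain ⟨M, hA⟩ := exists_factor UC A hcolA
  obtain ⟨N, hB⟩ := exists_factor UC B hcolB
  have hUCH : UCᴴ * UC = 1 := by rw [real_conjT]; exact hUC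
  -- eigenvalue bounds for (S*UC)ᴴ (S*UC)
  have hμpos : ∀ j, 0 ≤ (Matrix.isHermitian_transpose_mul_self (S * UC)).eigenvalues j :=
    fun j => Matrix.eigenvalues_conjTranspose_mul_self_nonneg (S * UC) j
  have hμbound : ∀ j, |1 - (Matrix.isHermitian_transpose_mul_self (S * UC)).eigenvalues j| ≤ ε := by
    intro j
    have hs := hsv (((Tuple.sort ((Matrix.isHermitian_transpose_mul_self (S * UC)).eigenvalues)).symm j).rev)
    rw [svals_def, Fin.rev_rev, Equiv.apply_symm_apply] at hs
    have hup : (Matrix.isHermitian_transpose_mul_self (S * UC)).eigenvalues j ≤ 1 + ε := by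
      have h2 : Real.sqrt ((Matrix.isHermitian_transpose_mul_self (S * UC)).eigenvalues j) ^ 2
          ≤ Real.sqrt (1 + ε) ^ 2 := by
        have := hs.2
        nlinarith [Real.sqrt_nonneg ((Matrix.isHermitian_transpose_mul_self (S * UC)).eigenvalues j)]
      rwa [Real.sq_sqrt (hμpos j), Real.sq_sqrt (by linarith : (0:ℝ) ≤ 1 + ε)] at h2
    have hlo : 1 - ε ≤ (Matrix.isHermitian_transpose_mul_self (S * UC)).eigenvalues j := by
      have h2 : Real.sqrt (1 - ε) ^ 2
          ≤ Real.sqrt ((Matrix.isHermitian_transpose_mul_self (S * UC)).eigenvalues j) ^ 2 := by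
        have := hs.1
        nlinarith [Real.sqrt_nonneg (1 - ε)]
      rwa [Real.sq_sqrt (hμpos j), Real.sq_sqrt (by linarith : (0:ℝ) ≤ 1 - ε)] at h2
    rw [abs_le]
    constructor <;> linarith
  -- Z = 1 - (S UC)ᴴ (S UC) acts with eigenvalues 1 - μ
  have hZv : ∀ j, ((1 : Matrix (Fin ω) (Fin ω) ℝ) - (S * UC)ᴴ * (S * UC)) *ᵥ
      ⇑((Matrix.isHermitian_transpose_mul_self (S * UC)).eigenvectorBasis j)
      = ((fun j => 1 - (Matrix.isHermitian_transpose_mul_self (S * UC)).eigenvalues j) j) •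
        ⇑((Matrix.isHermitian_transpose_mul_self (S * UC)).eigenvectorBasis j) := by
    intro j
    rw [Matrix.sub_mulVec, Matrix.one_mulVec, real_conjT,
      (Matrix.isHermitian_transpose_mul_self (S * UC)).mulVec_eigenvectorBasis j]
    rw [sub_smul, one_smul]
  have hZnorm : ∀ u : Fin ω → ℝ,
      ‖toE (((1 : Matrix (Fin ω) (Fin ω) ℝ) - (S * UC)ᴴ * (S * UC)) *ᵥ u)‖ ≤ ε * ‖toE u‖ := by
    intro u
    exact norm_mulVec_basis_le
      (Matrix.isHermitian_transpose_mul_self (S * UC)).eigenvectorBasis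
      (fun j => 1 - (Matrix.isHermitian_transpose_mul_self (S * UC)).eigenvalues j)
      hZv hε0.le (fun j => hμbound j) u
  -- norms of M, N mulVec
  have hMnorm : ∀ y, ‖toE (M *ᵥ y)‖ ≤ sNorm A * ‖toE y‖ := by
    intro y
    have he : ‖toE (M *ᵥ y)‖ = ‖toE (A *ᵥ y)‖ := by
      rw [norm_toE_eq_sqrt, norm_toE_eq_sqrt]
      congr 1
      have h1 : A *ᵥ y = UC *ᵥ (M *ᵥ y) := by rw [hA, mulVec_mulVec]
      rw [h1, ← dot_transpose_mul_self UC (M *ᵥ y), hUCH, Matrix.one_mulVec]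
    rw [he]
    exact mulVec_norm_le_sNorm A y
  have hNnorm : ∀ y, ‖toE (N *ᵥ y)‖ ≤ sNorm B * ‖toE y‖ := by
    intro y
    have he : ‖toE (N *ᵥ y)‖ = ‖toE (B *ᵥ y)‖ := by
      rw [norm_toE_eq_sqrt, norm_toE_eq_sqrt]
      congr 1
      have h1 : B *ᵥ y = UC *ᵥ (N *ᵥ y) := by rw [hB, mulVec_mulVec]
      rw [h1, ← dot_transpose_mul_self UC (N *ᵥ y), hUCH, Matrix.one_mulVec]
    rw [he]
    exact mulVec_norm_le_sNorm B y
  have hMt : ∀ w, ‖toE (Mᵀ *ᵥ w)‖ ≤ sNorm A * ‖toE w‖ :=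
    transpose_mulVec_norm_le M (sNorm_nonneg A) hMnorm
  -- difference identity
  have hAtB : Aᵀ * B = Mᵀ * N := by
    rw [hA, hB, Matrix.transpose_mul, Matrix.mul_assoc, ← Matrix.mul_assoc UCᵀ UC N, hUC,
      Matrix.one_mul]
  have hAtS : Aᵀ * Sᵀ * S * B = Mᵀ * (((S * UC)ᴴ * (S * UC)) * N) := by
    rw [hA, hB, Matrix.transpose_mul, real_conjT, Matrix.transpose_mul]
    simp only [Matrix.mul_assoc]
  have hdiff : Aᵀ * B - Aᵀ * Sᵀ * S * B
      = Mᵀ * (((1 : Matrix (Fin ω) (Fin ω) ℝ) - (S * UC)ᴴ * (S * UC)) * N) := by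
    rw [hAtB, hAtS, Matrix.sub_mul, Matrix.one_mul, Matrix.mul_sub]
  -- the operator bound on the difference
  have hd : ∀ u : Fin ℓ → ℝ, ‖toE ((Aᵀ * B - Aᵀ * Sᵀ * S * B) *ᵥ u)‖
      ≤ (ε * sNorm A * sNorm B) * ‖toE u‖ := by
    intro u
    rw [hdiff, ← mulVec_mulVec, ← mulVec_mulVec]
    calc ‖toE (Mᵀ *ᵥ (((1 : Matrix (Fin ω) (Fin ω) ℝ) - (S * UC)ᴴ * (S * UC)) *ᵥ (N *ᵥ u)))‖
        ≤ sNorm A * ‖toE (((1 : Matrix (Fin ω) (Fin ω) ℝ) - (S * UC)ᴴ * (S * UC)) *ᵥ (N *ᵥ u))‖ :=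
          hMt _
      _ ≤ sNorm A * (ε * ‖toE (N *ᵥ u)‖) :=
          mul_le_mul_of_nonneg_left (hZnorm _) (sNorm_nonneg A)
      _ ≤ sNorm A * (ε * (sNorm B * ‖toE u‖)) := by
          have h1 : ε * ‖toE (N *ᵥ u)‖ ≤ ε * (sNorm B * ‖toE u‖) :=
            mul_le_mul_of_nonneg_left (hNnorm u) hε0.le
          exact mul_le_mul_of_nonneg_left h1 (sNorm_nonneg A)
      _ = (ε * sNorm A * sNorm B) * ‖toE u‖ := by ring
  exact weyl_svals_abs (Aᵀ * B) (Aᵀ * Sᵀ * S * B)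
    (mul_nonneg (mul_nonneg hε0.le (sNorm_nonneg A)) (sNorm_nonneg B)) hd i
end

section
/- Let A ∈ ℝ^{m×n} and S ∈ ℝ^{r×m} with rank(SA) = rank(A) = p, and suppose all singular values of S U_A lie in [√(1−ε), √(1+ε)] with 0 < ε < 1/2, where U_A is the left singular factor of A's compact SVD. Then ‖((SA)^+)^T A^T A (SA)^+ − U_{SA} U_{SA}^T‖₂ ≤ 2ε, where (SA)^+ is the Moore–Penrose pseudoinverse of SA and U_{SA} is the left singular factor of SA. -/
open Matrix

-- matrix equality from action on vectors
lemma mat_ext {a b : ℕ} {X Y : Matrix (Fin a) (Fin b) ℝ}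
    (h : ∀ v, X *ᵥ v = Y *ᵥ v) : X = Y := by
  apply Matrix.toLin'.injective
  apply LinearMap.ext
  intro v
  simpa [Matrix.toLin'_apply] using h v

lemma fix_of_range_le {a b c : ℕ} (Q : Matrix (Fin a) (Fin a) ℝ)
    (Y : Matrix (Fin a) (Fin b) ℝ) (X : Matrix (Fin a) (Fin c) ℝ)
    (hQY : Q * Y = Y)
    (hle : LinearMap.range X.mulVecLin ≤ LinearMap.range Y.mulVecLin) : Q * X = X := by
  apply mat_ext
  intro v
  obtain ⟨w, hw⟩ := hle (LinearMap.mem_range_self X.mulVecLin v)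
  have hw' : Y *ᵥ w = X *ᵥ v := hw
  calc (Q * X) *ᵥ v = Q *ᵥ (X *ᵥ v) := by rw [Matrix.mulVec_mulVec]
    _ = Q *ᵥ (Y *ᵥ w) := by rw [hw']
    _ = (Q * Y) *ᵥ w := by rw [Matrix.mulVec_mulVec]
    _ = X *ᵥ v := by rw [hQY, hw']

lemma cancel_right_of_surj {a b c : ℕ} {B : Matrix (Fin a) (Fin b) ℝ}
    (hsurj : Function.Surjective B.mulVecLin) {X Y : Matrix (Fin c) (Fin a) ℝ}
    (h : X * B = Y * B) : X = Y := by
  apply mat_ext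
  intro v
  obtain ⟨w, hw⟩ := hsurj v
  have hw' : B *ᵥ w = v := hw
  calc X *ᵥ v = X *ᵥ (B *ᵥ w) := by rw [hw']
    _ = (X * B) *ᵥ w := by rw [Matrix.mulVec_mulVec]
    _ = (Y * B) *ᵥ w := by rw [h]
    _ = Y *ᵥ v := by rw [← Matrix.mulVec_mulVec, hw']

lemma psd_smul {a : ℕ} {M : Matrix (Fin a) (Fin a) ℝ} (h : M.PosSemidef)
    {c : ℝ} (hc : 0 ≤ c) : (c • M).PosSemidef := by
  refine Matrix.PosSemidef.of_dotProduct_mulVec_nonneg ?_ ?_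
  · unfold Matrix.IsHermitian
    rw [Matrix.conjTranspose_smul, h.1.eq]
    simp
  · intro x
    have := h.dotProduct_mulVec_nonneg x
    simp only [Matrix.smul_mulVec, dotProduct_smul, smul_eq_mul]
    exact mul_nonneg hc this


lemma psd_sub_smul {k : ℕ} {H : Matrix (Fin k) (Fin k) ℝ} (hH : H.IsHermitian) (a : ℝ)
    (h : ∀ i, a ≤ hH.eigenvalues i) : (H - a • 1).PosSemidef := by
  have hU : (hH.eigenvectorUnitary : Matrix (Fin k) (Fin k) ℝ) *
      star (hH.eigenvectorUnitary : Matrix (Fin k) (Fin k) ℝ) = 1 :=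
    Matrix.mem_unitaryGroup_iff.mp hH.eigenvectorUnitary.2
  have key : H - a • 1 = (hH.eigenvectorUnitary : Matrix (Fin k) (Fin k) ℝ) *
      diagonal (fun i => hH.eigenvalues i - a) *
      star (hH.eigenvectorUnitary : Matrix (Fin k) (Fin k) ℝ) := by
    have hs := hH.spectral_theorem
    rw [Unitary.conjStarAlgAut_apply] at hs
    have hdiag : diagonal (fun i => hH.eigenvalues i - a) =
        diagonal (RCLike.ofReal ∘ hH.eigenvalues) - a • 1 := by
      simp [Matrix.smul_one_eq_diagonal, Matrix.diagonal_sub, Function.comp]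
    rw [hdiag, Matrix.mul_sub, Matrix.sub_mul, ← hs]
    rw [Matrix.mul_smul, Matrix.smul_mul, mul_one, hU]
  rw [key, Matrix.star_eq_conjTranspose]
  exact (posSemidef_diagonal_iff.mpr (fun i => by simpa using h i)).mul_mul_conjTranspose_same _

lemma psd_smul_sub {k : ℕ} {H : Matrix (Fin k) (Fin k) ℝ} (hH : H.IsHermitian) (b : ℝ)
    (h : ∀ i, hH.eigenvalues i ≤ b) : (b • 1 - H).PosSemidef := by
  have hU : (hH.eigenvectorUnitary : Matrix (Fin k) (Fin k) ℝ) *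
      star (hH.eigenvectorUnitary : Matrix (Fin k) (Fin k) ℝ) = 1 :=
    Matrix.mem_unitaryGroup_iff.mp hH.eigenvectorUnitary.2
  have key : b • 1 - H = (hH.eigenvectorUnitary : Matrix (Fin k) (Fin k) ℝ) *
      diagonal (fun i => b - hH.eigenvalues i) *
      star (hH.eigenvectorUnitary : Matrix (Fin k) (Fin k) ℝ) := by
    have hs := hH.spectral_theorem
    rw [Unitary.conjStarAlgAut_apply] at hs
    have hdiag : diagonal (fun i => b - hH.eigenvalues i) =
        b • 1 - diagonal (RCLike.ofReal ∘ hH.eigenvalues) := by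
      simp [Matrix.smul_one_eq_diagonal, Matrix.diagonal_sub, Function.comp]
    rw [hdiag, Matrix.mul_sub, Matrix.sub_mul, ← hs]
    rw [Matrix.mul_smul, Matrix.smul_mul, mul_one, hU]
  rw [key, Matrix.star_eq_conjTranspose]
  exact (posSemidef_diagonal_iff.mpr (fun i => by simpa using h i)).mul_mul_conjTranspose_same _



lemma svals_surj {a b : ℕ} (X : Matrix (Fin a) (Fin b) ℝ) (j : Fin b) :
    ∃ i, svals X i = Real.sqrt ((Matrix.isHermitian_conjTranspose_mul_self X).eigenvalues j) := by
  refine ⟨((Tuple.sort ((Matrix.isHermitian_conjTranspose_mul_self X).eigenvalues)).symm j).rev, ?_⟩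
  have e : (Matrix.isHermitian_conjTranspose_mul_self X).eigenvalues =
      (show (Xᵀ * X).IsHermitian by simpa using Matrix.isHermitian_conjTranspose_mul_self X).eigenvalues := rfl
  simp only [svals, Fin.rev_rev, e, Equiv.apply_symm_apply]

lemma sNorm_le_of_psd {a : ℕ} (D : Matrix (Fin a) (Fin a) ℝ) (hD : D.IsSymm) (c : ℝ)
    (hc : 0 ≤ c) (h1 : (c • 1 - D).PosSemidef) (h2 : (c • 1 + D).PosSemidef) :
    sNorm D ≤ c := by
  refine Real.iSup_le (fun i => ?_) hc
  set hH := Matrix.isHermitian_conjTranspose_mul_self D with hHdef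
  set j := Tuple.sort hH.eigenvalues i.rev with hj
  have hgoal : svals D i = Real.sqrt (hH.eigenvalues j) := rfl
  rw [hgoal]
  set μ := hH.eigenvalues j with hμ
  have hμ0 : 0 ≤ μ := (Matrix.posSemidef_conjTranspose_mul_self D).eigenvalues_nonneg j
  set s := Real.sqrt μ with hs
  have hs0 : 0 ≤ s := Real.sqrt_nonneg _
  show s ≤ c
  set v : Fin a → ℝ := ⇑(hH.eigenvectorBasis j) with hv
  have hvne : v ≠ 0 := by
    have := hH.eigenvectorBasis.orthonormal.ne_zero j
    intro hc0
    apply this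
    ext k
    exact congrFun hc0 k
  have hev : (Dᵀ * D) *ᵥ v = μ • v := hH.mulVec_eigenvectorBasis j
  have hsym : Dᵀ * D = D * D := by rw [hD]
  have hDD : D *ᵥ (D *ᵥ v) = μ • v := by
    rw [Matrix.mulVec_mulVec, ← hsym]; exact hev
  set u := D *ᵥ v + s • v with hu
  have hDu : D *ᵥ u = s • u := by
    rw [hu, Matrix.mulVec_add, Matrix.mulVec_smul, hDD, smul_add, smul_smul,
      Real.mul_self_sqrt hμ0]
    abel
  have quad : ∀ (w : Fin a → ℝ), D *ᵥ w = s • w → w ≠ 0 → s ≤ c := by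
    intro w hw hwne
    have := h1.dotProduct_mulVec_nonneg w
    simp only [star_trivial, Matrix.sub_mulVec, Matrix.smul_mulVec, Matrix.one_mulVec,
      hw, dotProduct_sub, dotProduct_smul, smul_eq_mul] at this
    have hww : 0 < w ⬝ᵥ w := by
      have h0 : 0 ≤ w ⬝ᵥ w := Finset.sum_nonneg fun i _ => mul_self_nonneg _
      rcases lt_or_eq_of_le h0 with h | h
      · exact h
      · exact absurd (dotProduct_self_eq_zero.mp h.symm) hwne
    nlinarith
  have quad' : ∀ (w : Fin a → ℝ), D *ᵥ w = (-s) • w → w ≠ 0 → s ≤ c := by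
    intro w hw hwne
    have := h2.dotProduct_mulVec_nonneg w
    simp only [star_trivial, Matrix.add_mulVec, Matrix.smul_mulVec, Matrix.one_mulVec,
      hw, dotProduct_add, dotProduct_smul, smul_eq_mul] at this
    have hww : 0 < w ⬝ᵥ w := by
      have h0 : 0 ≤ w ⬝ᵥ w := Finset.sum_nonneg fun i _ => mul_self_nonneg _
      rcases lt_or_eq_of_le h0 with h | h
      · exact h
      · exact absurd (dotProduct_self_eq_zero.mp h.symm) hwne
    nlinarith
  by_cases hune : u = 0
  · apply quad' v _ hvne
    have : D *ᵥ v = -(s • v) := by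
      rw [hu] at hune
      linear_combination (norm := module) hune
    rw [this, neg_smul]
  · exact quad u hDu hune
lemma psd_two_sub {r p : ℕ} (M : Matrix (Fin r) (Fin p) ℝ) (ε : ℝ) (hε1 : ε < 1/2)
    (hGlo : (Mᵀ * M - (1 - ε) • 1).PosSemidef)
    (hGinv' : (Mᵀ * M) * (Mᵀ * M)⁻¹ = 1) :
    ((2:ℝ) • (1 : Matrix (Fin r) (Fin r) ℝ) - ((Mᵀ*M)⁻¹ * Mᵀ)ᵀ * ((Mᵀ*M)⁻¹ * Mᵀ)).PosSemidef := by
  set G := Mᵀ * M with hGdef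
  set T := G⁻¹ * Mᵀ with hTdef
  refine Matrix.PosSemidef.of_dotProduct_mulVec_nonneg ?_ ?_
  · unfold Matrix.IsHermitian
    rw [Matrix.conjTranspose_eq_transpose_of_trivial, Matrix.transpose_sub,
      Matrix.transpose_smul, Matrix.transpose_one, Matrix.transpose_mul,
      Matrix.transpose_transpose]
  · intro x
    simp only [star_trivial, Matrix.sub_mulVec, Matrix.smul_mulVec, Matrix.one_mulVec,
      dotProduct_sub, dotProduct_smul, smul_eq_mul]
    set y := T *ᵥ x with hy
    set z := M *ᵥ y with hz
    have hxTy : x ⬝ᵥ ((Tᵀ * T) *ᵥ x) = y ⬝ᵥ y := by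
      rw [← Matrix.mulVec_mulVec, dotProduct_mulVec, Matrix.vecMul_transpose, hy]
    have hGy : G *ᵥ y = Mᵀ *ᵥ x := by
      rw [hy, hTdef, Matrix.mulVec_mulVec, ← Matrix.mul_assoc, hGinv', Matrix.one_mul]
    have hq1 : y ⬝ᵥ (G *ᵥ y) = z ⬝ᵥ z := by
      rw [hGdef, ← Matrix.mulVec_mulVec, dotProduct_mulVec, Matrix.vecMul_transpose, ← hz]
    have hq2 : y ⬝ᵥ (G *ᵥ y) = z ⬝ᵥ x := by
      rw [hGy, dotProduct_mulVec, Matrix.vecMul_transpose, ← hz]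
    have hzx : z ⬝ᵥ x = z ⬝ᵥ z := by rw [← hq1, ← hq2]
    have hcs : (z ⬝ᵥ x)^2 ≤ (z ⬝ᵥ z) * (x ⬝ᵥ x) := by
      have := Finset.sum_mul_sq_le_sq_mul_sq Finset.univ z x
      simpa [dotProduct, sq] using this
    have hlo := hGlo.dotProduct_mulVec_nonneg y
    simp only [star_trivial, Matrix.sub_mulVec, Matrix.smul_mulVec, Matrix.one_mulVec,
      dotProduct_sub, dotProduct_smul, smul_eq_mul] at hlo
    have hb : 0 ≤ x ⬝ᵥ x := Finset.sum_nonneg fun i _ => mul_self_nonneg _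
    have hc0 : 0 ≤ y ⬝ᵥ y := Finset.sum_nonneg fun i _ => mul_self_nonneg _
    have ha : 0 ≤ z ⬝ᵥ z := Finset.sum_nonneg fun i _ => mul_self_nonneg _
    rw [hxTy]
    rw [hzx] at hcs
    -- hlo : 0 ≤ y⬝Gy - (1-ε) * y⬝y ; y⬝Gy = z⬝z
    rw [hq1] at hlo
    rcases eq_or_lt_of_le ha with h0 | h0
    · nlinarith
    · have hab : z ⬝ᵥ z ≤ x ⬝ᵥ x := by nlinarith
      nlinarith

theorem stmt11 {m n r p : ℕ}
    (A : Matrix (Fin m) (Fin n) ℝ) (S : Matrix (Fin r) (Fin m) ℝ)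
    (hrSA : (S * A).rank = p) (hrA : A.rank = p)
    (UA : Matrix (Fin m) (Fin p) ℝ)
    (hUA : UAᵀ * UA = 1)
    (hrUA : LinearMap.range UA.mulVecLin = LinearMap.range A.mulVecLin)
    (USA : Matrix (Fin r) (Fin p) ℝ)
    (hUSA : USAᵀ * USA = 1)
    (hrUSA : LinearMap.range USA.mulVecLin = LinearMap.range (S * A).mulVecLin)
    -- P is the Moore–Penrose pseudoinverse of S * A
    (P : Matrix (Fin n) (Fin r) ℝ)
    (hP1 : S * A * P * (S * A) = S * A) (hP2 : P * (S * A) * P = P)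
    (hP3 : (S * A * P).IsSymm) (hP4 : (P * (S * A)).IsSymm)
    (ε : ℝ) (hε0 : 0 < ε) (hε1 : ε < 1 / 2)
    (hsv : ∀ i, Real.sqrt (1 - ε) ≤ svals (S * UA) i ∧ svals (S * UA) i ≤ Real.sqrt (1 + ε)) :
    sNorm (Pᵀ * Aᵀ * A * P - USA * USAᵀ) ≤ 2 * ε := by
  classical
  obtain ⟨B, hBdef⟩ : ∃ B' : Matrix (Fin p) (Fin n) ℝ, B' = UAᵀ * A := ⟨_, rfl⟩
  obtain ⟨M, hMdef⟩ : ∃ M' : Matrix (Fin r) (Fin p) ℝ, M' = S * UA := ⟨_, rfl⟩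
  rw [← hMdef] at hsv
  -- A = UA * B
  have hA : UA * B = A := by
    have h1 : (UA * UAᵀ) * UA = UA := by rw [Matrix.mul_assoc, hUA, Matrix.mul_one]
    have h2 := fix_of_range_le (UA * UAᵀ) UA A h1 (le_of_eq hrUA.symm)
    rw [hBdef, ← Matrix.mul_assoc]
    exact h2
  have hSA : M * B = S * A := by
    have h2 : M * B = S * (UA * B) := by rw [hMdef, Matrix.mul_assoc]
    rw [h2, hA]
  -- eigenvalue bounds for G = Mᵀ M
  have hct : Mᴴ = Mᵀ := Matrix.conjTranspose_eq_transpose_of_trivial M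
  have hH : (Mᴴ * M).IsHermitian := Matrix.isHermitian_conjTranspose_mul_self M
  have heig : ∀ j, 1 - ε ≤ hH.eigenvalues j ∧ hH.eigenvalues j ≤ 1 + ε := by
    intro j
    obtain ⟨i, hi⟩ := svals_surj M j
    have h := hsv i
    rw [hi] at h
    have h0 : (0:ℝ) ≤ hH.eigenvalues j :=
      (Matrix.posSemidef_conjTranspose_mul_self M).eigenvalues_nonneg j
    exact ⟨(Real.sqrt_le_sqrt_iff h0).mp h.1,
      (Real.sqrt_le_sqrt_iff (by linarith)).mp h.2⟩
  have hGloM : ((Mᵀ * M) - (1 - ε) • 1).PosSemidef := by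
    rw [← hct]; exact psd_sub_smul hH (1 - ε) (fun j => (heig j).1)
  have hGhiM : ((1 + ε) • 1 - (Mᵀ * M)).PosSemidef := by
    rw [← hct]; exact psd_smul_sub hH (1 + ε) (fun j => (heig j).2)
  obtain ⟨G, hGdef⟩ : ∃ G' : Matrix (Fin p) (Fin p) ℝ, G' = Mᵀ * M := ⟨_, rfl⟩
  have hGlo : (G - (1 - ε) • 1).PosSemidef := by rw [hGdef]; exact hGloM
  have hGhi : ((1 + ε) • 1 - G).PosSemidef := by rw [hGdef]; exact hGhiM
  -- G is invertible
  have hGpd : G.PosDef := by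
    refine Matrix.PosDef.of_dotProduct_mulVec_pos ?_ ?_
    · rw [hGdef, ← hct]; exact hH
    · intro x hx
      have h1 := hGlo.dotProduct_mulVec_nonneg x
      simp only [star_trivial, Matrix.sub_mulVec, Matrix.smul_mulVec,
        Matrix.one_mulVec, dotProduct_sub, dotProduct_smul, smul_eq_mul] at h1
      have hxx : 0 < x ⬝ᵥ x := by
        have h0 : 0 ≤ x ⬝ᵥ x := Finset.sum_nonneg fun i _ => mul_self_nonneg _
        rcases lt_or_eq_of_le h0 with h | h
        · exact h
        · exact absurd (dotProduct_self_eq_zero.mp h.symm) hx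
      simp only [star_trivial]
      nlinarith
  have hdet : IsUnit G.det := isUnit_iff_ne_zero.mpr hGpd.det_pos.ne'
  have hGinv : G⁻¹ * G = 1 := Matrix.nonsing_inv_mul G hdet
  have hGinv' : G * G⁻¹ = 1 := Matrix.mul_nonsing_inv G hdet
  -- B is surjective
  have hrB : B.rank = p := by
    apply le_antisymm
    · exact B.rank_le_card_height.trans (Fintype.card_fin p).le
    · calc p = A.rank := hrA.symm
        _ = (UA * B).rank := by rw [hA]
        _ ≤ B.rank := Matrix.rank_mul_le_right UA B
  have hsurjB : Function.Surjective B.mulVecLin := by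
    rw [← LinearMap.range_eq_top]
    apply Submodule.eq_top_of_finrank_eq
    rw [Matrix.rank] at hrB
    rw [hrB, Module.finrank_fin_fun]
  -- left cancellation by M
  have cancelM : ∀ {c : ℕ} (X Y : Matrix (Fin p) (Fin c) ℝ), M * X = M * Y → X = Y := by
    intro c X Y h
    have h2 : G * X = G * Y := by
      rw [hGdef, Matrix.mul_assoc, Matrix.mul_assoc, h]
    calc X = (G⁻¹ * G) * X := by rw [hGinv, Matrix.one_mul]
      _ = G⁻¹ * (G * Y) := by rw [Matrix.mul_assoc, h2]
      _ = (G⁻¹ * G) * Y := by rw [Matrix.mul_assoc]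
      _ = Y := by rw [hGinv, Matrix.one_mul]
  -- T M = 1
  have hTMB : B * P * M * B = B := by
    apply cancelM
    calc M * (B * P * M * B) = (M * B) * P * (M * B) := by
          simp only [Matrix.mul_assoc]
      _ = M * B := by rw [hSA, hP1]
  have hTM : B * P * M = 1 := by
    apply cancel_right_of_surj hsurjB
    rw [hTMB, Matrix.one_mul]
  -- Q = S A P = M (B P)
  obtain ⟨Q, hQdef⟩ : ∃ Q' : Matrix (Fin r) (Fin r) ℝ, Q' = S * A * P := ⟨_, rfl⟩
  have hQM : Q = M * (B * P) := by rw [hQdef, ← hSA, Matrix.mul_assoc]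
  have hQsym : Qᵀ = Q := by rw [hQdef]; exact hP3
  -- Mᵀ Q = Mᵀ
  have hMQ : Mᵀ * Q = Mᵀ := by
    have hTMt : Mᵀ * (B * P)ᵀ = 1 := by
      have h := congrArg Matrix.transpose hTM
      rw [Matrix.transpose_mul, Matrix.transpose_one] at h
      exact h
    calc Mᵀ * Q = Mᵀ * Qᵀ := by rw [hQsym]
      _ = Mᵀ * ((B * P)ᵀ * Mᵀ) := by rw [hQM, Matrix.transpose_mul]
      _ = (Mᵀ * (B * P)ᵀ) * Mᵀ := by rw [Matrix.mul_assoc]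
      _ = Mᵀ := by rw [hTMt, Matrix.one_mul]
  -- T = G⁻¹ Mᵀ
  have hT : B * P = G⁻¹ * Mᵀ := by
    calc B * P = (G⁻¹ * G) * (B * P) := by rw [hGinv, Matrix.one_mul]
      _ = G⁻¹ * (Mᵀ * (M * (B * P))) := by rw [hGdef]; simp only [Matrix.mul_assoc]
      _ = G⁻¹ * (Mᵀ * Q) := by rw [← hQM]
      _ = G⁻¹ * Mᵀ := by rw [hMQ]
  -- USA USAᵀ = Q
  have hQSA : Q * (S * A) = S * A := by
    have h1 : (M * (B * P)) * (M * B) = M * ((B * P * M) * B) := by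
      simp only [Matrix.mul_assoc]
    rw [hQM, ← hSA, h1, hTM, Matrix.one_mul]
  have hQUSA : Q * USA = USA :=
    fix_of_range_le Q (S * A) USA hQSA (le_of_eq hrUSA)
  have hRUSA : (USA * USAᵀ) * USA = USA := by
    rw [Matrix.mul_assoc, hUSA, Matrix.mul_one]
  have hRSA : (USA * USAᵀ) * (S * A) = S * A :=
    fix_of_range_le (USA * USAᵀ) USA (S * A) hRUSA (le_of_eq hrUSA.symm)
  have hRQ : (USA * USAᵀ) * Q = Q := by
    rw [hQdef, ← Matrix.mul_assoc, hRSA]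
  have hQR : Q * (USA * USAᵀ) = USA * USAᵀ := by
    rw [← Matrix.mul_assoc, hQUSA]
  have hRsym : (USA * USAᵀ)ᵀ = USA * USAᵀ := by
    rw [Matrix.transpose_mul, Matrix.transpose_transpose]
  have hQeqR : USA * USAᵀ = Q := by
    calc USA * USAᵀ = (Q * (USA * USAᵀ))ᵀ := by rw [hQR, hRsym]
      _ = (USA * USAᵀ)ᵀ * Qᵀ := by rw [Matrix.transpose_mul]
      _ = (USA * USAᵀ) * Q := by rw [hRsym, hQsym]
      _ = Q := hRQ
  -- rewrite the target matrix
  have hAtA : Aᵀ * A = Bᵀ * B := by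
    conv_lhs => rw [← hA]
    rw [Matrix.transpose_mul, Matrix.mul_assoc, ← Matrix.mul_assoc UAᵀ UA B, hUA,
      Matrix.one_mul]
  obtain ⟨T, hTdef⟩ : ∃ T' : Matrix (Fin p) (Fin r) ℝ, T' = G⁻¹ * Mᵀ := ⟨_, rfl⟩
  have hD : Pᵀ * Aᵀ * A * P - USA * USAᵀ = Tᵀ * T - M * T := by
    have h1 : Pᵀ * Aᵀ * A * P = Tᵀ * T := by
      calc Pᵀ * Aᵀ * A * P = Pᵀ * (Aᵀ * A) * P := by simp only [Matrix.mul_assoc]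
        _ = (B * P)ᵀ * (B * P) := by
            rw [hAtA, Matrix.transpose_mul]
            simp only [Matrix.mul_assoc]
        _ = Tᵀ * T := by rw [hT, hTdef]
    rw [h1, hQeqR, hQM, hT, hTdef]
  rw [hD]
  -- symmetry of G⁻¹ and G
  have hGsym : Gᵀ = G := by rw [hGdef, Matrix.transpose_mul, Matrix.transpose_transpose]
  have hGisym : (G⁻¹)ᵀ = G⁻¹ := by rw [Matrix.transpose_nonsing_inv, hGsym]
  have hTt : Tᵀ = M * G⁻¹ := by
    rw [hTdef, Matrix.transpose_mul, Matrix.transpose_transpose, hGisym]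
  -- M T = Tᵀ G T
  have hMT : M * T = Tᵀ * G * T := by
    rw [hTt, Matrix.mul_assoc M G⁻¹ G, hGinv, Matrix.mul_one]
  have hpsd2 : ((2:ℝ) • (1 : Matrix (Fin r) (Fin r) ℝ) - Tᵀ * T).PosSemidef := by
    have hGinvM : (Mᵀ * M) * (Mᵀ * M)⁻¹ = 1 := by rw [← hGdef]; exact hGinv'
    have h2s := psd_two_sub M ε hε1 hGloM hGinvM
    rw [← hGdef, ← hTdef] at h2s
    exact h2s
  -- conjugation PSD facts
  have hconj1 : (Tᵀ * (G - (1 - ε) • 1) * T).PosSemidef := by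
    have h := hGlo.conjTranspose_mul_mul_same T
    rw [Matrix.conjTranspose_eq_transpose_of_trivial] at h
    exact h
  have hconj2 : (Tᵀ * ((1 + ε) • 1 - G) * T).PosSemidef := by
    have h := hGhi.conjTranspose_mul_mul_same T
    rw [Matrix.conjTranspose_eq_transpose_of_trivial] at h
    exact h
  -- decomposition identities
  have hup : (2 * ε) • (1 : Matrix (Fin r) (Fin r) ℝ) - (Tᵀ * T - M * T) =
      ε • ((2:ℝ) • (1 : Matrix (Fin r) (Fin r) ℝ) - Tᵀ * T) + Tᵀ * (G - (1 - ε) • 1) * T := by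
    rw [hMT]
    have e1 : Tᵀ * (G - (1 - ε) • 1) * T = Tᵀ * G * T - (1 - ε) • (Tᵀ * T) := by
      rw [Matrix.mul_sub, Matrix.sub_mul, Matrix.mul_smul, Matrix.mul_one, Matrix.smul_mul]
    rw [e1]
    module
  have hdn : (2 * ε) • (1 : Matrix (Fin r) (Fin r) ℝ) + (Tᵀ * T - M * T) =
      ε • ((2:ℝ) • (1 : Matrix (Fin r) (Fin r) ℝ) - Tᵀ * T) + Tᵀ * ((1 + ε) • 1 - G) * T := by
    rw [hMT]
    have e1 : Tᵀ * ((1 + ε) • 1 - G) * T = (1 + ε) • (Tᵀ * T) - Tᵀ * G * T := by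
      rw [Matrix.mul_sub, Matrix.sub_mul, Matrix.mul_smul, Matrix.mul_one, Matrix.smul_mul]
    rw [e1]
    module
  -- symmetry of D
  have hDsym : (Tᵀ * T - M * T).IsSymm := by
    show (Tᵀ * T - M * T)ᵀ = Tᵀ * T - M * T
    rw [hMT]
    simp only [Matrix.transpose_sub, Matrix.transpose_mul, Matrix.transpose_transpose,
      hGsym, Matrix.mul_assoc]
  apply sNorm_le_of_psd _ hDsym _ (by linarith)
  · rw [hup]
    exact (psd_smul hpsd2 hε0.le).add hconj1
  · rw [hdn]
    exact (psd_smul hpsd2 hε0.le).add hconj2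
end
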